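/- Let ω̃_{ij} for distinct i, j ∈ {1,2,3,4,5} be strictly positive real numbers with ω̃_{ij} = ω̃_{ji}, ω̃_{35} ≥ ω̃_{24}, ω̃_{25} ≥ ω̃_{13}, and suppose D := ω̃_{35}ω̃_{14} + ω̃_{14}ω̃_{25} + ω̃_{25}ω̃_{24} + ω̃_{13}ω̃_{35} − ω̃_{35}ω̃_{25} > 0. Put x₅ = (ω̃_{13} − ω̃_{25} − ω̃_{24})(ω̃_{35} + ω̃_{13} − ω̃_{24})/D and y₅ = (ω̃_{35} + ω̃_{13} − ω̃_{24})/(ω̃_{35} + ω̃_{25}), and p₁ = (0,0), p₂ = (1,0), p₃ = (1,1), p₄ = (0,1), p₅ = (x₅,y₅) in ℝ². Then x₅ < 0 and 0 < y₅ < 1 (so p₁,…,p₅ form a strictly convex pentagon in this cyclic order), and there exist real boundary stresses ω_{12}, ω_{23}, ω_{34}, ω_{45}, ω_{15} such that every vertex is in equilibrium: for each i ∈ {1,…,5}, Σ_{j ≠ i} ω̃_{ij}(p_i − p_j) + Σ_{j adjacent to i in the 5-cycle 1-2-3-4-5} ω_{ij}(p_i − p_j) = (0,0). -/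

import Mathlib

open BigOperators

set_option maxHeartbeats 1600000

/-- **Case 3A (pentagonal outer face).** The vertices `1,…,5` are indexed by `Fin 5` as
`0,…,4`, so `ω̃₁₃ = w 0 2`, `ω̃₁₄ = w 0 3`, `ω̃₂₄ = w 1 3`, `ω̃₂₅ = w 1 4`,
`ω̃₃₅ = w 2 4`. Given symmetric positive substitution stresses with `ω̃₃₅ ≥ ω̃₂₄`,
`ω̃₂₅ ≥ ω̃₁₃` and positive denominator `D`, the placement
`p₁=(0,0), p₂=(1,0), p₃=(1,1), p₄=(0,1), p₅=(x₅,y₅)` satisfies `x₅ < 0`, `0 < y₅ < 1`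
(a strictly convex pentagon), and there exist boundary stresses on the 5-cycle putting
every vertex in equilibrium. -/
theorem pentagon_case3A_boundary_equilibrium
    (w : Fin 5 → Fin 5 → ℝ)
    (hpos : ∀ i j, i ≠ j → 0 < w i j)
    (hsym : ∀ i j, w i j = w j i)
    (h35 : w 1 3 ≤ w 2 4)
    (h25 : w 0 2 ≤ w 1 4)
    (hD : 0 < w 2 4 * w 0 3 + w 0 3 * w 1 4 + w 1 4 * w 1 3 + w 0 2 * w 2 4
            - w 2 4 * w 1 4) :
    let D : ℝ := w 2 4 * w 0 3 + w 0 3 * w 1 4 + w 1 4 * w 1 3 + w 0 2 * w 2 4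
            - w 2 4 * w 1 4
    let x5 : ℝ := (w 0 2 - w 1 4 - w 1 3) * (w 2 4 + w 0 2 - w 1 3) / D
    let y5 : ℝ := (w 2 4 + w 0 2 - w 1 3) / (w 2 4 + w 1 4)
    let p : Fin 5 → ℝ × ℝ := ![(0, 0), (1, 0), (1, 1), (0, 1), (x5, y5)]
    (x5 < 0 ∧ 0 < y5 ∧ y5 < 1) ∧
      ∃ ov : Fin 5 → ℝ,
        ∀ i : Fin 5,
          (∑ j ∈ Finset.univ.filter (fun j => j ≠ i), w i j • (p i - p j))
              + ov i • (p i - p (i + 1)) + ov (i - 1) • (p i - p (i - 1)) = 0 := by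
  intro D x5 y5 p
  set a := w 0 2 with ha
  set b := w 0 3 with hb
  set c := w 1 3 with hc
  set d := w 1 4 with hd
  set e := w 2 4 with he
  have hapos : 0 < a := hpos 0 2 (by decide)
  have hbpos : 0 < b := hpos 0 3 (by decide)
  have hcpos : 0 < c := hpos 1 3 (by decide)
  have hdpos : 0 < d := hpos 1 4 (by decide)
  have hepos : 0 < e := hpos 2 4 (by decide)
  have hDpos : 0 < D := hD
  have hDne : D ≠ 0 := ne_of_gt hDpos
  have hnum : 0 < e + a - c := by linarith
  have hnumne : e + a - c ≠ 0 := ne_of_gt hnum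
  have hden : 0 < e + d := by linarith
  have hdenne : e + d ≠ 0 := ne_of_gt hden
  have hdca : 0 < d + c - a := by linarith
  have hdcane : d + c - a ≠ 0 := ne_of_gt hdca
  have hx : x5 < 0 := by
    have : (a - d - c) * (e + a - c) < 0 :=
      mul_neg_of_neg_of_pos (by linarith) hnum
    exact div_neg_of_neg_of_pos this hDpos
  have hy0 : 0 < y5 := div_pos hnum hden
  have hy1 : y5 < 1 := (div_lt_one hden).mpr (by linarith)
  refine ⟨⟨hx, hy0, hy1⟩, ?_⟩
  have hxdef : x5 = (a - d - c) * (e + a - c) / D := rfl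
  have hydef : y5 = (e + a - c) / (e + d) := rfl
  have hDdef : D = e * b + b * d + d * c + a * e - e * d := rfl
  have hyne : y5 ≠ 0 := ne_of_gt hy0
  have h1yne : (1 : ℝ) - y5 ≠ 0 := by linarith
  refine ⟨![-c - d * (1 - x5) - w 0 1,
            -c - d * y5 - w 1 2,
            -a - e * (1 - x5) - w 2 3,
            -((b + c) * (e + d)) / (d + c - a) - w 3 4,
            -((a + b) * (e + d)) / (e + a - c) - w 4 0], ?_⟩
  intro i
  have hs10 : w 1 0 = w 0 1 := hsym 1 0
  have hs20 : w 2 0 = a := hsym 2 0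
  have hs21 : w 2 1 = w 1 2 := hsym 2 1
  have hs30 : w 3 0 = b := hsym 3 0
  have hs31 : w 3 1 = c := hsym 3 1
  have hs32 : w 3 2 = w 2 3 := hsym 3 2
  have hs41 : w 4 1 = d := hsym 4 1
  have hs42 : w 4 2 = e := hsym 4 2
  have hs43 : w 4 3 = w 3 4 := hsym 4 3
  have hs04 : w 0 4 = w 4 0 := hsym 0 4
  have f1 : (0:Fin 5) - 1 = 4 := by decide
  have f2 : (1:Fin 5) - 1 = 0 := by decide
  have f3 : (2:Fin 5) - 1 = 1 := by decide
  have f4 : (3:Fin 5) - 1 = 2 := by decide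
  have f5 : (4:Fin 5) - 1 = 3 := by decide
  have g1 : (0:Fin 5) + 1 = 1 := by decide
  have g2 : (1:Fin 5) + 1 = 2 := by decide
  have g3 : (2:Fin 5) + 1 = 3 := by decide
  have g4 : (3:Fin 5) + 1 = 4 := by decide
  have g5 : (4:Fin 5) + 1 = 0 := by decide
  have hfil : ∀ i : Fin 5,
      (∑ j ∈ Finset.univ.filter (fun j => j ≠ i), w i j • (p i - p j))
        = ∑ j : Fin 5, w i j • (p i - p j) := by
    intro i
    rw [Finset.filter_ne', Finset.sum_erase_eq_sub (Finset.mem_univ i)]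
    simp
  rw [hfil]
  have m2 : (⟨2, by omega⟩ : Fin 5) = 2 := rfl
  have m3 : (⟨3, by omega⟩ : Fin 5) = 3 := rfl
  have m4 : (⟨4, by omega⟩ : Fin 5) = 4 := rfl
  have v3 : ∀ {α : Type} (a0 a1 a2 a3 a4 : α), ![a0, a1, a2, a3, a4] 3 = a3 :=
    fun _ _ _ _ _ => rfl
  have v4 : ∀ {α : Type} (a0 a1 a2 a3 a4 : α), ![a0, a1, a2, a3, a4] 4 = a4 :=
    fun _ _ _ _ _ => rfl
  fin_cases i <;>
    norm_num [p, Fin.sum_univ_five, Prod.ext_iff, Prod.smul_mk,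
      Prod.mk_sub_mk, smul_eq_mul, Matrix.cons_val_zero, Matrix.cons_val_one, Matrix.cons_val_two,
      v3, v4, m2, m3, m4, Fin.mk_zero, Fin.mk_one,
      f1, f2, f3, f4, f5, g1, g2, g3, g4, g5,
      hs10, hs20, hs21, hs30, hs31, hs32, hs41, hs42, hs43, hs04] <;>
    constructor <;>
    (try simp only [← ha, ← hb, ← hc, ← hd, ← he]) <;>
    (try simp only [hxdef, hydef, hDdef]) <;>
    (try rw [← hDdef]) <;>
    (try field_simp [hDne, hdenne, hnumne, hdcane]) <;>
    ring
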